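/- Let k ≥ 1 and let u₀, s_1,…,s_k, c_1,…,c_k, d_1,…,d_k be real numbers with d_i + 1 ≠ 0 for all i. On W = ℝ^{3k+2} with basis {e_{u_0},…,e_{u_k}, e_{v_0},…,e_{v_k}, e_{s_1},…,e_{s_k}}, let g be the symmetric bilinear form whose only nonzero values on pairs of basis vectors are g(e_{u_0},e_{u_i}) = 2c_i s_i, g(e_{u_i},e_{u_i}) = −2u₀ s_i, g(e_{u_0},e_{v_0}) = 1, g(e_{u_i},e_{v_i}) = 1, and g(e_{s_i},e_{s_i}) = ε_i (1 ≤ i ≤ k); and let T be the 4-linear form on W, antisymmetric in its first two and in its last two arguments and symmetric under interchange of the first pair with the second pair, whose only nonzero entries on basis vectors are generated by T(e_{u_0},e_{u_i},e_{u_i},e_{u_0}) = c_i² ε_i and T(e_{u_0},e_{u_i},e_{u_i},e_{s_i}) = d_i + 1 (1 ≤ i ≤ k). Then there exists a linear isomorphism Φ : W → V such that g(x,y) = (Φx,Φy) and T(x,y,z,w) = R(Φx,Φy,Φz,Φw) for all x,y,z,w ∈ W; that is, (W,g,T) is isomorphic to the 0-model 𝒱. -/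

import Mathlib

open Finset

/-- Index type for the distinguished basis of `V = ℝ^{3k+2}`:
`Sum.inl i ↔ U_i` (0 ≤ i ≤ k), `Sum.inr (Sum.inl i) ↔ V_i` (0 ≤ i ≤ k),
`Sum.inr (Sum.inr i) ↔ S_{i+1}` (1 ≤ i+1 ≤ k). -/
abbrev Idx (k : ℕ) := Fin (k+1) ⊕ (Fin (k+1) ⊕ Fin k)

abbrev Model (k : ℕ) := Idx k → ℝ

/-- The distinguished basis vector `U_i`. -/
def U (k : ℕ) (i : Fin (k+1)) : Model k := Pi.single (Sum.inl i) 1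

/-- The distinguished basis vector `V_i`. -/
def Vb (k : ℕ) (i : Fin (k+1)) : Model k := Pi.single (Sum.inr (Sum.inl i)) 1

/-- The distinguished basis vector `S_{i+1}`. -/
def S (k : ℕ) (i : Fin k) : Model k := Pi.single (Sum.inr (Sum.inr i)) 1

/-- The inner product `(·,·)` with `(U_0,V_0) = (U_i,V_i) = 1`, `(S_i,S_i) = ε_i`. -/
def ip (k : ℕ) (ε : Fin k → ℝ) (x y : Model k) : ℝ :=
  (∑ i : Fin (k+1),
    (x (Sum.inl i) * y (Sum.inr (Sum.inl i)) + x (Sum.inr (Sum.inl i)) * y (Sum.inl i)))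
  + ∑ i : Fin k, ε i * x (Sum.inr (Sum.inr i)) * y (Sum.inr (Sum.inr i))

/-- `A_i(x,y) = x_{U_0} y_{U_i} - x_{U_i} y_{U_0}`. -/
def Af (k : ℕ) (i : Fin k) (x y : Model k) : ℝ :=
  x (Sum.inl 0) * y (Sum.inl i.succ) - x (Sum.inl i.succ) * y (Sum.inl 0)

/-- `B_i(x,y) = x_{U_i} y_{S_i} - x_{S_i} y_{U_i}`. -/
def Bf (k : ℕ) (i : Fin k) (x y : Model k) : ℝ :=
  x (Sum.inl i.succ) * y (Sum.inr (Sum.inr i)) - x (Sum.inr (Sum.inr i)) * y (Sum.inl i.succ)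

/-- The algebraic curvature tensor `R` of the 0-model. -/
def Rt (k : ℕ) (x y z w : Model k) : ℝ :=
  ∑ i : Fin k, (Af k i x y * Bf k i z w + Bf k i x y * Af k i z w)

/-- `A_V = ker R`. -/
def AV (k : ℕ) : Set (Model k) := {ξ | ∀ x y z, Rt k ξ x y z = 0}

/-- `A_{S,V} = A_V^⊥`. -/
def ASV (k : ℕ) (ε : Fin k → ℝ) : Set (Model k) := {η | ∀ ξ ∈ AV k, ip k ε η ξ = 0}

/-- The metric `g` of the manifold `ℳ_F` evaluated at a point, on the coordinate
frame `{e_{u_0},…,e_{u_k}, e_{v_0},…,e_{v_k}, e_{s_1},…,e_{s_k}}` (indexed by `Idx k`),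
with `c_i = f_i(u_i)`:  its only nonzero entries on basis vectors are
`g(e_{u_0},e_{u_i}) = 2 c_i s_i`, `g(e_{u_i},e_{u_i}) = -2 u₀ s_i`,
`g(e_{u_0},e_{v_0}) = g(e_{u_i},e_{v_i}) = 1` and `g(e_{s_i},e_{s_i}) = ε_i`. -/
def gF (k : ℕ) (ε : Fin k → ℝ) (u₀ : ℝ) (s c : Fin k → ℝ) (x y : Model k) : ℝ :=
  (∑ i : Fin k, 2 * c i * s i *
      (x (Sum.inl 0) * y (Sum.inl i.succ) + x (Sum.inl i.succ) * y (Sum.inl 0)))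
  + (∑ i : Fin k, (-(2 * u₀ * s i)) * (x (Sum.inl i.succ) * y (Sum.inl i.succ)))
  + (x (Sum.inl 0) * y (Sum.inr (Sum.inl 0)) + x (Sum.inr (Sum.inl 0)) * y (Sum.inl 0))
  + (∑ i : Fin k,
      (x (Sum.inl i.succ) * y (Sum.inr (Sum.inl i.succ))
        + x (Sum.inr (Sum.inl i.succ)) * y (Sum.inl i.succ)))
  + (∑ i : Fin k, ε i * x (Sum.inr (Sum.inr i)) * y (Sum.inr (Sum.inr i)))

/-- `C_i(x,y) = x_{u_0} y_{u_i} - x_{u_i} y_{u_0}` on `W`. -/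
def Cf (k : ℕ) (i : Fin k) (x y : Model k) : ℝ :=
  x (Sum.inl 0) * y (Sum.inl i.succ) - x (Sum.inl i.succ) * y (Sum.inl 0)

/-- `D_i(x,y) = x_{u_i} y_{s_i} - x_{s_i} y_{u_i}` on `W`. -/
def Df (k : ℕ) (i : Fin k) (x y : Model k) : ℝ :=
  x (Sum.inl i.succ) * y (Sum.inr (Sum.inr i)) - x (Sum.inr (Sum.inr i)) * y (Sum.inl i.succ)

/-- The curvature tensor of `ℳ_F` at a point, with `c_i = f_i(u_i)` and `d_i = f_i'(u_i)`:
it is antisymmetric in the first two and in the last two slots, symmetric under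
interchanging the two pairs, and its only nonzero entries on basis vectors are generated by
`T(e_{u_0},e_{u_i},e_{u_i},e_{u_0}) = c_i² ε_i` and `T(e_{u_0},e_{u_i},e_{u_i},e_{s_i}) = d_i + 1`. -/
def Tc (k : ℕ) (ε : Fin k → ℝ) (c d : Fin k → ℝ) (x y z w : Model k) : ℝ :=
  ∑ i : Fin k,
    ( -((c i) ^ 2 * ε i) * (Cf k i x y * Cf k i z w)
      + (d i + 1) * (Cf k i x y * Df k i z w + Df k i x y * Cf k i z w) )


noncomputable section ZeroModelAux

variable {k : ℕ}

/-- sign-like factor -/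
def aC (d : Fin k → ℝ) (i : Fin k) : ℝ := (d i + 1) / |d i + 1|
def bC (ε c d : Fin k → ℝ) (i : Fin k) : ℝ := c i ^ 2 * ε i / (2 * |d i + 1|)
def LC (d : Fin k → ℝ) (i : Fin k) : ℝ := Real.sqrt |d i + 1|

def phiF (ε : Fin k → ℝ) (u₀ : ℝ) (s c d : Fin k → ℝ) (x : Model k) : Model k := fun j =>
  match j with
  | Sum.inl j => Fin.cases (x (Sum.inl 0)) (fun i => LC d i * x (Sum.inl i.succ)) j
  | Sum.inr (Sum.inl j) => Fin.cases
      (x (Sum.inr (Sum.inl 0))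
        + (∑ i, 2 * c i * s i * x (Sum.inl i.succ))
        - (∑ i, ε i * aC d i * bC ε c d i * x (Sum.inr (Sum.inr i)))
        - (1/2) * (∑ i, ε i * (bC ε c d i)^2) * x (Sum.inl 0))
      (fun i => (x (Sum.inr (Sum.inl i.succ)) - u₀ * s i * x (Sum.inl i.succ)) / LC d i) j
  | Sum.inr (Sum.inr i) => aC d i * x (Sum.inr (Sum.inr i)) + bC ε c d i * x (Sum.inl 0)

lemma phiF_add (ε : Fin k → ℝ) (u₀ : ℝ) (s c d : Fin k → ℝ) (x y : Model k) :
    phiF ε u₀ s c d (x + y) = phiF ε u₀ s c d x + phiF ε u₀ s c d y := by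
  funext j
  rcases j with j | j | i
  · induction j using Fin.cases <;>
      simp [phiF, mul_add] <;> ring
  · induction j using Fin.cases <;>
      simp [phiF, mul_add, Finset.sum_add_distrib] <;> ring
  · simp [phiF, mul_add]; ring

lemma phiF_smul (ε : Fin k → ℝ) (u₀ : ℝ) (s c d : Fin k → ℝ) (r : ℝ) (x : Model k) :
    phiF ε u₀ s c d (r • x) = r • phiF ε u₀ s c d x := by
  funext j
  rcases j with j | j | i
  · induction j using Fin.cases <;>
      simp [phiF, mul_add] <;> ring
  · induction j using Fin.cases <;>
      (simp [phiF, Finset.mul_sum, mul_sub, mul_add, mul_comm, mul_assoc, mul_left_comm]; try ring)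
  · simp [phiF, mul_add]; ring

end ZeroModelAux

theorem manifold_zero_modeled_on_V (k : ℕ) (hk : 1 ≤ k) (ε : Fin k → ℝ)
    (hε : ∀ i, ε i = 1 ∨ ε i = -1)
    (u₀ : ℝ) (s c d : Fin k → ℝ) (hd : ∀ i, d i + 1 ≠ 0) :
    ∃ Φ : Model k ≃ₗ[ℝ] Model k,
      (∀ x y : Model k, gF k ε u₀ s c x y = ip k ε (Φ x) (Φ y)) ∧
      (∀ x y z w : Model k, Tc k ε c d x y z w = Rt k (Φ x) (Φ y) (Φ z) (Φ w)) := by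
  classical
  have habs : ∀ i, |d i + 1| ≠ 0 := fun i => abs_ne_zero.mpr (hd i)
  have habspos : ∀ i, 0 < |d i + 1| := fun i => abs_pos.mpr (hd i)
  have hL : ∀ i, LC d i ≠ 0 := fun i => by
    simp only [LC, ne_eq, Real.sqrt_eq_zero', not_le, abs_pos, not_or]
    intro h; exact hd i h
  have hL2 : ∀ i, LC d i ^ 2 = |d i + 1| := fun i => Real.sq_sqrt (abs_nonneg _)
  have ha : ∀ i, aC d i ≠ 0 := fun i => div_ne_zero (hd i) (habs i)
  set F : Model k →ₗ[ℝ] Model k :=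
    { toFun := phiF ε u₀ s c d
      map_add' := phiF_add ε u₀ s c d
      map_smul' := phiF_smul ε u₀ s c d } with hF
  have hinj : Function.Injective F := by
    rw [← LinearMap.ker_eq_bot, LinearMap.ker_eq_bot']
    intro x hx
    have h0 : x (Sum.inl 0) = 0 := by
      have := congrFun hx (Sum.inl 0); simpa [hF, phiF] using this
    have hU : ∀ i : Fin k, x (Sum.inl i.succ) = 0 := fun i => by
      have := congrFun hx (Sum.inl i.succ)
      simp only [hF, LinearMap.coe_mk, AddHom.coe_mk, phiF, Fin.cases_succ,
        Pi.zero_apply, mul_eq_zero] at this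
      tauto
    have hS : ∀ i : Fin k, x (Sum.inr (Sum.inr i)) = 0 := fun i => by
      have := congrFun hx (Sum.inr (Sum.inr i))
      simp only [hF, LinearMap.coe_mk, AddHom.coe_mk, phiF, Pi.zero_apply, h0,
        mul_zero, add_zero, mul_eq_zero] at this
      tauto
    have hV : ∀ i : Fin k, x (Sum.inr (Sum.inl i.succ)) = 0 := fun i => by
      have := congrFun hx (Sum.inr (Sum.inl i.succ))
      simp only [hF, LinearMap.coe_mk, AddHom.coe_mk, phiF, Fin.cases_succ,
        Pi.zero_apply, hU i, mul_zero, sub_zero, div_eq_zero_iff] at this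
      tauto
    have hV0 : x (Sum.inr (Sum.inl 0)) = 0 := by
      have := congrFun hx (Sum.inr (Sum.inl 0))
      simpa [hF, phiF, h0, hU, hS] using this
    funext j
    rcases j with j | j | i
    · induction j using Fin.cases with
      | zero => simpa using h0
      | succ i => simpa using hU i
    · induction j using Fin.cases with
      | zero => simpa using hV0
      | succ i => simpa using hV i
    · simpa using hS i
  have hsurj : Function.Surjective F := LinearMap.injective_iff_surjective.mp hinj
  refine ⟨LinearEquiv.ofBijective F ⟨hinj, hsurj⟩, ?_, ?_⟩
  · intro x y
    simp only [LinearEquiv.ofBijective_apply, hF, LinearMap.coe_mk, AddHom.coe_mk]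
    simp only [ip, phiF, gF, Fin.sum_univ_succ, Fin.cases_zero, Fin.cases_succ]
    have haa : ∀ i, aC d i ^ 2 = 1 := fun i => by
      rw [aC, div_pow, sq_abs]; exact div_self (pow_ne_zero 2 (hd i))
    have hP : ∑ i : Fin k,
        (LC d i * x (Sum.inl i.succ) *
            ((y (Sum.inr (Sum.inl i.succ)) - u₀ * s i * y (Sum.inl i.succ)) / LC d i) +
          (x (Sum.inr (Sum.inl i.succ)) - u₀ * s i * x (Sum.inl i.succ)) / LC d i *
            (LC d i * y (Sum.inl i.succ))) =
        ∑ i : Fin k,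
          (x (Sum.inl i.succ) * y (Sum.inr (Sum.inl i.succ)) +
            x (Sum.inr (Sum.inl i.succ)) * y (Sum.inl i.succ)) +
        ∑ i : Fin k, -(2 * u₀ * s i) * (x (Sum.inl i.succ) * y (Sum.inl i.succ)) := by
      rw [← Finset.sum_add_distrib]
      refine Finset.sum_congr rfl fun i _ => ?_
      field_simp [hL i]
      ring
    have hQ : ∑ i : Fin k,
        ε i * (aC d i * x (Sum.inr (Sum.inr i)) + bC ε c d i * x (Sum.inl 0)) *
          (aC d i * y (Sum.inr (Sum.inr i)) + bC ε c d i * y (Sum.inl 0)) =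
        ∑ i : Fin k, ε i * x (Sum.inr (Sum.inr i)) * y (Sum.inr (Sum.inr i)) +
        ∑ i : Fin k, ε i * aC d i * bC ε c d i * (x (Sum.inl 0) * y (Sum.inr (Sum.inr i))) +
        ∑ i : Fin k, ε i * aC d i * bC ε c d i * (x (Sum.inr (Sum.inr i)) * y (Sum.inl 0)) +
        ∑ i : Fin k, ε i * bC ε c d i ^ 2 * (x (Sum.inl 0) * y (Sum.inl 0)) := by
      simp only [← Finset.sum_add_distrib]
      refine Finset.sum_congr rfl fun i _ => ?_
      linear_combination (ε i * x (Sum.inr (Sum.inr i)) * y (Sum.inr (Sum.inr i))) * haa i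
    have hG1 : ∑ i : Fin k,
        2 * c i * s i * (x (Sum.inl 0) * y (Sum.inl i.succ) + x (Sum.inl i.succ) * y (Sum.inl 0)) =
        ∑ i : Fin k, 2 * c i * s i * (x (Sum.inl 0) * y (Sum.inl i.succ)) +
        ∑ i : Fin k, 2 * c i * s i * (x (Sum.inl i.succ) * y (Sum.inl 0)) := by
      rw [← Finset.sum_add_distrib]
      exact Finset.sum_congr rfl fun i _ => by ring
    have hx1 : x (Sum.inl 0) * ∑ i : Fin k, 2 * c i * s i * y (Sum.inl i.succ) =
        ∑ i : Fin k, 2 * c i * s i * (x (Sum.inl 0) * y (Sum.inl i.succ)) := by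
      rw [Finset.mul_sum]; exact Finset.sum_congr rfl fun i _ => by ring
    have hy1 : (∑ i : Fin k, 2 * c i * s i * x (Sum.inl i.succ)) * y (Sum.inl 0) =
        ∑ i : Fin k, 2 * c i * s i * (x (Sum.inl i.succ) * y (Sum.inl 0)) := by
      rw [Finset.sum_mul]; exact Finset.sum_congr rfl fun i _ => by ring
    have hx2 : x (Sum.inl 0) * ∑ i : Fin k, ε i * aC d i * bC ε c d i * y (Sum.inr (Sum.inr i)) =
        ∑ i : Fin k, ε i * aC d i * bC ε c d i * (x (Sum.inl 0) * y (Sum.inr (Sum.inr i))) := by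
      rw [Finset.mul_sum]; exact Finset.sum_congr rfl fun i _ => by ring
    have hy2 : (∑ i : Fin k, ε i * aC d i * bC ε c d i * x (Sum.inr (Sum.inr i))) * y (Sum.inl 0) =
        ∑ i : Fin k, ε i * aC d i * bC ε c d i * (x (Sum.inr (Sum.inr i)) * y (Sum.inl 0)) := by
      rw [Finset.sum_mul]; exact Finset.sum_congr rfl fun i _ => by ring
    have hQ3 : ∑ i : Fin k, ε i * bC ε c d i ^ 2 * (x (Sum.inl 0) * y (Sum.inl 0)) =
        (∑ i : Fin k, ε i * bC ε c d i ^ 2) * (x (Sum.inl 0) * y (Sum.inl 0)) :=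
      (Finset.sum_mul _ _ _).symm
    linear_combination -hP - hQ + hG1 - hx1 - hy1 + hx2 + hy2 - hQ3
  · intro x y z w
    simp only [LinearEquiv.ofBijective_apply, hF, LinearMap.coe_mk, AddHom.coe_mk]
    simp only [Tc, Rt, Cf, Df, Af, Bf, phiF, Fin.cases_zero, Fin.cases_succ]
    refine Finset.sum_congr rfl fun i _ => ?_
    have h1 : LC d i ^ 2 * aC d i = d i + 1 := by
      rw [hL2 i, aC]; exact mul_div_cancel₀ _ (habs i)
    have h2 : 2 * (LC d i ^ 2 * bC ε c d i) = c i ^ 2 * ε i := by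
      rw [hL2 i, bC]; field_simp
      rw [mul_assoc, mul_div_cancel_left₀ _ (habs i)]
    linear_combination
      (-((x (Sum.inl 0) * y (Sum.inl i.succ) - x (Sum.inl i.succ) * y (Sum.inl 0)) *
          (z (Sum.inl i.succ) * w (Sum.inr (Sum.inr i)) - z (Sum.inr (Sum.inr i)) * w (Sum.inl i.succ)) +
        (x (Sum.inl i.succ) * y (Sum.inr (Sum.inr i)) - x (Sum.inr (Sum.inr i)) * y (Sum.inl i.succ)) *
          (z (Sum.inl 0) * w (Sum.inl i.succ) - z (Sum.inl i.succ) * w (Sum.inl 0)))) * h1 +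
      ((x (Sum.inl 0) * y (Sum.inl i.succ) - x (Sum.inl i.succ) * y (Sum.inl 0)) *
          (z (Sum.inl 0) * w (Sum.inl i.succ) - z (Sum.inl i.succ) * w (Sum.inl 0))) * h2
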